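/- Let u : U → ℝ be C³ on open U ⊆ ℝⁿ with |∇u| ≡ 1, set k = -Δu, and let f be a C¹ real function that is nonnegative and nonincreasing on the range of k, with k ≥ 0 on U. Then div(f(k)∇u) = f'(k)⟨∇u, ∇k⟩ - f(k)·k = f'(k)|D²u|² - f(k)k ≤ 0 pointwise on U. -/

import Mathlib

noncomputable def pd (n : ℕ) (i : Fin n) (f : EuclideanSpace ℝ (Fin n) → ℝ)
    (x : EuclideanSpace ℝ (Fin n)) : ℝ :=
  fderiv ℝ f x (EuclideanSpace.single i 1)

section helpers
variable {n : ℕ} {g h a b : EuclideanSpace ℝ (Fin n) → ℝ} {x : EuclideanSpace ℝ (Fin n)}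
  {U : Set (EuclideanSpace ℝ (Fin n))}

lemma pd_contDiffAt {m p : WithTop ℕ∞} (hg : ContDiffAt ℝ p g x) (hmp : m + 1 ≤ p) (i : Fin n) :
    ContDiffAt ℝ m (pd n i g) x := by
  have := (hg.fderiv_right hmp).clm_apply
    (contDiffAt_const (c := (EuclideanSpace.single i (1:ℝ))))
  exact this

lemma pd_congr (hU : IsOpen U) (hx : x ∈ U) (hgh : ∀ y ∈ U, g y = h y) (i : Fin n) :
    pd n i g x = pd n i h x := by
  unfold pd
  rw [Filter.EventuallyEq.fderiv_eq (Filter.eventuallyEq_of_mem (hU.mem_nhds hx) hgh)]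

lemma pd_const (c : ℝ) (i : Fin n) : pd n i (fun _ => c) x = 0 := by
  unfold pd; rw [fderiv_fun_const]; simp

lemma pd_mul (ha : DifferentiableAt ℝ a x) (hb : DifferentiableAt ℝ b x) (i : Fin n) :
    pd n i (fun y => a y * b y) x = a x * pd n i b x + b x * pd n i a x := by
  unfold pd; rw [fderiv_fun_mul ha hb]; simp [smul_eq_mul]

lemma pd_sum {ι : Type*} (s : Finset ι) (A : ι → EuclideanSpace ℝ (Fin n) → ℝ)
    (hA : ∀ j ∈ s, DifferentiableAt ℝ (A j) x) (i : Fin n) :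
    pd n i (fun y => ∑ j ∈ s, A j y) x = ∑ j ∈ s, pd n i (A j) x := by
  unfold pd; rw [fderiv_fun_sum hA]; simp

lemma pd_neg (i : Fin n) : pd n i (fun y => -(g y)) x = -pd n i g x := by
  unfold pd; rw [fderiv_fun_neg]; simp

lemma pd_comp {f : ℝ → ℝ} (hf : DifferentiableAt ℝ f (g x)) (hg : DifferentiableAt ℝ g x)
    (i : Fin n) : pd n i (fun y => f (g y)) x = deriv f (g x) * pd n i g x := by
  unfold pd
  rw [show (fun y => f (g y)) = f ∘ g from rfl, fderiv_comp x hf hg]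
  simp only [ContinuousLinearMap.coe_comp', Function.comp_apply]
  rw [show fderiv ℝ g x (EuclideanSpace.single i 1) = pd n i g x from rfl,
    show pd n i g x = pd n i g x • (1:ℝ) by simp, map_smul]
  simp [fderiv_apply_one_eq_deriv, smul_eq_mul, mul_comm]

lemma pd_symm (hg : ContDiffAt ℝ 2 g x) (i j : Fin n) :
    pd n i (pd n j g) x = pd n j (pd n i g) x := by
  have hd : DifferentiableAt ℝ (fderiv ℝ g) x :=
    (hg.fderiv_right (m := 1) (by norm_num)).differentiableAt (by norm_num)
  have key : ∀ v w, fderiv ℝ (fun y => fderiv ℝ g y v) x w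
      = fderiv ℝ (fderiv ℝ g) x w v := by
    intro v w
    rw [fderiv_clm_apply hd (differentiableAt_const v)]
    simp
  have hsymm := hg.isSymmSndFDerivAt (by simp [minSmoothness_of_isRCLikeNormedField])
  show fderiv ℝ (pd n j g) x (EuclideanSpace.single i 1) = _
  unfold pd
  rw [key, hsymm, ← key]

end helpers

theorem stmt_15 (n : ℕ) (U : Set (EuclideanSpace ℝ (Fin n))) (hU : IsOpen U)
    (u : EuclideanSpace ℝ (Fin n) → ℝ) (hu : ContDiffOn ℝ 3 u U)
    (heik : ∀ x ∈ U, (∑ i, (pd n i u x) ^ 2) = 1)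
    (k : EuclideanSpace ℝ (Fin n) → ℝ)
    (hk : k = fun x => -(∑ i, pd n i (pd n i u) x))
    (hknn : ∀ x ∈ U, 0 ≤ k x)
    (f : ℝ → ℝ) (hf : ContDiff ℝ 1 f)
    (hfnn : ∀ x ∈ U, 0 ≤ f (k x))
    (hfmono : ∀ x ∈ U, deriv f (k x) ≤ 0) :
    ∀ x ∈ U,
      (∑ i, pd n i (fun y => f (k y) * pd n i u y) x) =
          deriv f (k x) * (∑ i, pd n i u x * pd n i k x) - f (k x) * k x ∧
      (∑ i, pd n i (fun y => f (k y) * pd n i u y) x) =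
          deriv f (k x) * (∑ i, ∑ j, (pd n i (pd n j u) x) ^ 2) - f (k x) * k x ∧
      (∑ i, pd n i (fun y => f (k y) * pd n i u y) x) ≤ 0 := by
  intro x hx
  have hCA3 : ∀ y ∈ U, ContDiffAt ℝ 3 u y := fun y hy => hu.contDiffAt (hU.mem_nhds hy)
  have hCA2 : ∀ y ∈ U, ∀ j, ContDiffAt ℝ 2 (pd n j u) y := fun y hy j =>
    pd_contDiffAt (hCA3 y hy) (by norm_num) j
  have hCA1 : ∀ y ∈ U, ∀ i j, ContDiffAt ℝ 1 (pd n i (pd n j u)) y := fun y hy i j =>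
    pd_contDiffAt (hCA2 y hy j) (by norm_num) i
  have d1 : ∀ y ∈ U, ∀ j, DifferentiableAt ℝ (pd n j u) y := fun y hy j =>
    (hCA2 y hy j).differentiableAt (by norm_num)
  have d2 : ∀ y ∈ U, ∀ i j, DifferentiableAt ℝ (pd n i (pd n j u)) y := fun y hy i j =>
    (hCA1 y hy i j).differentiableAt (by norm_num)
  have hkd : DifferentiableAt ℝ k x := by
    rw [hk]
    exact ((ContDiffAt.sum (fun i _ => hCA1 x hx i i)).neg).differentiableAt one_ne_zero
  have hfd : DifferentiableAt ℝ f (k x) := (hf.differentiable one_ne_zero).differentiableAt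
  have hfkd : DifferentiableAt ℝ (fun y => f (k y)) x := DifferentiableAt.comp x hfd hkd
  -- Step A: divergence formula
  have hsum2 : (∑ i, pd n i (pd n i u) x) = -k x := by simp [hk]
  have hA : (∑ i, pd n i (fun y => f (k y) * pd n i u y) x)
      = deriv f (k x) * (∑ i, pd n i u x * pd n i k x) - f (k x) * k x := by
    have e1 : ∀ i : Fin n, pd n i (fun y => f (k y) * pd n i u y) x
        = f (k x) * pd n i (pd n i u) x + pd n i u x * (deriv f (k x) * pd n i k x) := by
      intro i
      rw [pd_mul hfkd (d1 x hx i) i, pd_comp hfd hkd i]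
    rw [Finset.sum_congr rfl fun i _ => e1 i, Finset.sum_add_distrib, ← Finset.mul_sum, hsum2]
    have h2 : (∑ i, pd n i u x * (deriv f (k x) * pd n i k x))
        = deriv f (k x) * ∑ i, pd n i u x * pd n i k x := by
      rw [Finset.mul_sum]; exact Finset.sum_congr rfl fun i _ => by ring
    rw [h2]; ring
  -- Step B: derivative of eikonal
  have hG : ∀ y ∈ U, ∀ i : Fin n, (∑ j, pd n j u y * pd n i (pd n j u) y) = 0 := by
    intro y hy i
    have h0 : pd n i (fun z => ∑ j, (pd n j u z)^2) y = 0 := by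
      rw [pd_congr (h := fun _ => (1:ℝ)) hU hy (fun z hz => heik z hz) i, pd_const]
    have hsq : ∀ j : Fin n, pd n i (fun z => (pd n j u z)^2) y
        = 2 * (pd n j u y * pd n i (pd n j u) y) := by
      intro j
      have e : (fun z => (pd n j u z)^2) = fun z => pd n j u z * pd n j u z := by
        funext z; ring
      rw [e, pd_mul (d1 y hy j) (d1 y hy j) i]; ring
    rw [pd_sum Finset.univ (fun j z => (pd n j u z)^2) (fun j _ => (d1 y hy j).pow 2) i,
      Finset.sum_congr rfl fun j _ => hsq j, ← Finset.mul_sum] at h0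
    linarith
  -- Step C: symmetry of second derivatives on U
  have hsym2 : ∀ y ∈ U, ∀ i j, pd n i (pd n j u) y = pd n j (pd n i u) y := fun y hy i j =>
    pd_symm ((hCA3 y hy).of_le (by norm_num)) i j
  -- Step D: third derivative swap
  have hsym3 : ∀ y ∈ U, ∀ i j, pd n i (pd n j (pd n j u)) y = pd n j (pd n j (pd n i u)) y := by
    intro y hy i j
    rw [pd_symm (hCA2 y hy j) i j]
    exact pd_congr hU hy (fun z hz => hsym2 z hz i j) j
  -- Step E: differentiate hG
  have hE : ∀ i : Fin n, (∑ j, pd n j u x * pd n i (pd n i (pd n j u)) x)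
      = -∑ j, (pd n i (pd n j u) x)^2 := by
    intro i
    have h0 : pd n i (fun y => ∑ j, pd n j u y * pd n i (pd n j u) y) x = 0 := by
      rw [pd_congr (h := fun _ => (0:ℝ)) hU hx (fun z hz => hG z hz i) i, pd_const]
    rw [pd_sum Finset.univ (fun j y => pd n j u y * pd n i (pd n j u) y)
        (fun j _ => (d1 x hx j).mul (d2 x hx i j)) i,
      Finset.sum_congr rfl fun j _ => pd_mul (d1 x hx j) (d2 x hx i j) i,
      Finset.sum_add_distrib] at h0
    have hsq : (∑ j, pd n i (pd n j u) x * pd n i (pd n j u) x)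
        = ∑ j, (pd n i (pd n j u) x)^2 := Finset.sum_congr rfl fun j _ => (sq _).symm
    rw [hsq] at h0
    linarith
  -- Step F: key identity
  have hpdk : ∀ i : Fin n, pd n i k x = -∑ j, pd n i (pd n j (pd n j u)) x := by
    intro i
    rw [hk, pd_neg i, pd_sum Finset.univ (fun j y => pd n j (pd n j u) y)
      (fun j _ => (hCA1 x hx j j).differentiableAt one_ne_zero) i]
  have hkey : (∑ i, pd n i u x * pd n i k x) = ∑ i, ∑ j, (pd n i (pd n j u) x)^2 := by
    calc (∑ i, pd n i u x * pd n i k x)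
        = ∑ i, ∑ j, -(pd n i u x * pd n i (pd n j (pd n j u)) x) := by
          refine Finset.sum_congr rfl fun i _ => ?_
          rw [hpdk i, mul_neg, Finset.mul_sum, ← Finset.sum_neg_distrib]
      _ = ∑ i, ∑ j, -(pd n i u x * pd n j (pd n j (pd n i u)) x) := by
          exact Finset.sum_congr rfl fun i _ => Finset.sum_congr rfl fun j _ => by
            rw [hsym3 x hx i j]
      _ = ∑ j, ∑ i, -(pd n i u x * pd n j (pd n j (pd n i u)) x) := Finset.sum_comm
      _ = ∑ j, -(∑ i, pd n i u x * pd n j (pd n j (pd n i u)) x) := by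
          exact Finset.sum_congr rfl fun j _ => Finset.sum_neg_distrib _
      _ = ∑ j, -(-∑ i, (pd n j (pd n i u) x)^2) := by
          exact Finset.sum_congr rfl fun j _ => by rw [hE j]
      _ = ∑ j, ∑ i, (pd n j (pd n i u) x)^2 := by simp
  refine ⟨hA, ?_, ?_⟩
  · rw [hA, hkey]
  · rw [hA, hkey]
    have hS : (0:ℝ) ≤ ∑ i, ∑ j, (pd n i (pd n j u) x)^2 :=
      Finset.sum_nonneg fun i _ => Finset.sum_nonneg fun j _ => sq_nonneg _
    nlinarith [hfmono x hx, hS, mul_nonneg (hfnn x hx) (hknn x hx),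
      mul_nonpos_of_nonpos_of_nonneg (hfmono x hx) hS]
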